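/- arXiv:2312.17263 — 3 statements merged into one kernel-verified Lean document; each statement's English description precedes it below -/
import Mathlib

section
/- If X₁,…,Xₙ are independent random variables each distributed N(μ, σ²), then the sample mean X̄ = (1/n)∑Xᵢ and the sample variance S² = (1/(n-1))∑(Xᵢ - X̄)² are independent random variables. -/
open MeasureTheory ProbabilityTheory Real
open scoped ENNReal NNReal

namespace StudentAux


lemma lintegral_pi_prod : ∀ {n : ℕ} (μ : Fin n → Measure ℝ), (∀ i, SigmaFinite (μ i)) →
    ∀ (f : Fin n → ℝ → ℝ≥0∞), (∀ i, Measurable (f i)) →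
    ∫⁻ x, ∏ i, f i (x i) ∂(Measure.pi μ) = ∏ i, ∫⁻ x, f i x ∂(μ i) := by
  intro n
  induction n with
  | zero =>
    intro μ _ f _
    rw [Measure.pi_of_empty μ]
    simp [lintegral_dirac]
  | succ n ih =>
    intro μ hs f hf
    haveI := hs
    have hmp := (measurePreserving_piFinSuccAbove μ 0).symm
    have hFmeas : Measurable (fun x : ∀ _ : Fin (n+1), ℝ => ∏ i, f i (x i)) :=
      Finset.measurable_prod _ fun i _ => (hf i).comp (measurable_pi_apply i)
    rw [← hmp.lintegral_comp hFmeas]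
    have : ∀ (p : ℝ × (Fin n → ℝ)),
        (∏ i, f i (((MeasurableEquiv.piFinSuccAbove (fun _ => ℝ) 0).symm p) i))
          = f 0 p.1 * ∏ j : Fin n, f j.succ (p.2 j) := by
      intro p
      simp [MeasurableEquiv.piFinSuccAbove_symm_apply, Fin.prod_univ_succ, Fin.zero_succAbove]
    simp_rw [this]
    rw [lintegral_prod_mul (f := f 0) (g := fun y : Fin n → ℝ => ∏ j : Fin n, f j.succ (y j))
      ((hf 0).aemeasurable)
      ((Finset.measurable_prod _ fun i _ => (hf i.succ).comp (measurable_pi_apply i)).aemeasurable)]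
    simp only [Fin.zero_succAbove]
    rw [ih _ (fun i => hs i.succ) _ (fun i => hf i.succ), Fin.prod_univ_succ]


variable {n : ℕ}

lemma setLIntegral_pi_prod (μ : Fin n → Measure ℝ) [∀ i, SigmaFinite (μ i)]
    (f : Fin n → ℝ → ℝ≥0∞) (hf : ∀ i, Measurable (f i))
    (s : Fin n → Set ℝ) (hs : ∀ i, MeasurableSet (s i)) :
    ∫⁻ x in Set.univ.pi s, ∏ i, f i (x i) ∂(Measure.pi μ)
      = ∏ i, ∫⁻ x in s i, f i x ∂(μ i) := by
  have hbox : MeasurableSet (Set.univ.pi s) := MeasurableSet.univ_pi hs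
  rw [← lintegral_indicator hbox (fun x => ∏ i, f i (x i))]
  have : ∀ x : Fin n → ℝ, (Set.univ.pi s).indicator (fun x => ∏ i, f i (x i)) x
      = ∏ i, (s i).indicator (f i) (x i) := by
    intro x
    by_cases hx : x ∈ Set.univ.pi s
    · rw [Set.indicator_of_mem hx]
      exact Finset.prod_congr rfl fun i _ =>
        (Set.indicator_of_mem (hx i (Set.mem_univ i)) _).symm
    · rw [Set.indicator_of_notMem hx]
      simp only [Set.mem_pi, Set.mem_univ, forall_true_left, not_forall] at hx
      obtain ⟨i, hi⟩ := hx
      exact (Finset.prod_eq_zero (Finset.mem_univ i) (Set.indicator_of_notMem hi _)).symm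
  simp_rw [this]
  rw [lintegral_pi_prod μ (fun i => inferInstance) _
    (fun i => (hf i).indicator (hs i))]
  exact Finset.prod_congr rfl fun i _ => lintegral_indicator (hs i) _

lemma map_withDensity_equiv {α β : Type*} [MeasurableSpace α] [MeasurableSpace β]
    (e : α ≃ᵐ β) (μ : Measure α) {g : α → ℝ≥0∞} (hg : Measurable g) :
    Measure.map e (μ.withDensity g) = (Measure.map e μ).withDensity (g ∘ e.symm) := by
  ext s hs
  rw [Measure.map_apply e.measurable hs, withDensity_apply _ (e.measurable hs),
    withDensity_apply _ hs,
    setLIntegral_map hs (hg.comp e.symm.measurable) e.measurable]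
  refine setLIntegral_congr_fun (e.measurable hs) (fun x _ => ?_)
  simp

lemma pi_gaussian (m : Fin n → ℝ) (v : ℝ≥0) (hv : v ≠ 0) :
    Measure.pi (fun i => gaussianReal (m i) v) =
      (Measure.pi fun _ => (volume : Measure ℝ)).withDensity
        (fun x => ∏ i, gaussianPDF (m i) v (x i)) := by
  refine Measure.pi_eq fun s hs => ?_
  rw [withDensity_apply _ (MeasurableSet.univ_pi hs),
    setLIntegral_pi_prod _ _ (fun i => measurable_gaussianPDF _ _) _ hs]
  refine Finset.prod_congr rfl fun i _ => ?_
  rw [gaussianReal_of_var_ne_zero _ hv, withDensity_apply _ (hs i)]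



lemma exists_rot [NeZero n] :
    ∃ R : (Fin n → ℝ) ≃ᵐ (Fin n → ℝ),
      MeasurePreserving R (Measure.pi fun _ => (volume : Measure ℝ))
        (Measure.pi fun _ => (volume : Measure ℝ)) ∧
      (∀ x : Fin n → ℝ, R x 0 = (∑ i, x i) / Real.sqrt n) ∧
      (∀ (x : Fin n → ℝ) (c : ℝ),
        ∑ k, (R x k - (if k = 0 then Real.sqrt n * c else 0))^2 = ∑ i, (x i - c)^2) := by
  have hn : n ≠ 0 := NeZero.ne n
  have hnR : (0:ℝ) < n := by
    have : 0 < n := Nat.pos_of_ne_zero hn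
    exact_mod_cast this
  have hsq : Real.sqrt n ≠ 0 := by positivity
  set u : EuclideanSpace ℝ (Fin n) := WithLp.toLp 2 (fun _ => (Real.sqrt n)⁻¹) with hu_def
  have hcard : Fintype.card (Fin n) = n := Fintype.card_fin n
  have hnorm : ‖u‖ = 1 := by
    rw [EuclideanSpace.norm_eq]
    have : ∀ i : Fin n, ‖u i‖ ^ 2 = (n:ℝ)⁻¹ := by
      intro i
      rw [norm_eq_abs, sq_abs]
      show ((Real.sqrt n)⁻¹) ^ 2 = (n:ℝ)⁻¹
      rw [← Real.sqrt_inv, Real.sq_sqrt (by positivity)]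
    rw [Finset.sum_congr rfl fun i _ => this i, Finset.sum_const, Finset.card_univ, hcard]
    simp only [nsmul_eq_mul]
    rw [mul_inv_cancel₀ (ne_of_gt hnR), Real.sqrt_one]
  have hON : Orthonormal ℝ (Set.restrict {(0 : Fin n)} (fun _ => u)) := by
    constructor
    · intro i; exact hnorm
    · intro i j hij
      exact absurd (Subtype.ext (i.2.trans j.2.symm)) hij
  obtain ⟨b, hb⟩ := hON.exists_orthonormalBasis_extension_of_card_eq
    (by simp [finrank_euclideanSpace])
  have hb0 : b 0 = u := hb 0 rfl
  set e := (MeasurableEquiv.toLp 2 (Fin n → ℝ)).symm with he_def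
  set R : (Fin n → ℝ) ≃ᵐ (Fin n → ℝ) :=
    (e.symm.trans b.repr.toHomeomorph.toMeasurableEquiv).trans e with hR_def
  have hRapp : ∀ (x : Fin n → ℝ) (k : Fin n),
      R x k = b.repr ((EuclideanSpace.equiv (Fin n) ℝ).symm x) k := fun _ _ => rfl
  have hesymm : ∀ (x : Fin n → ℝ) (i : Fin n),
      ((EuclideanSpace.equiv (Fin n) ℝ).symm x : EuclideanSpace ℝ (Fin n)) i = x i :=
    fun _ _ => rfl
  refine ⟨R, ?_, ?_, ?_⟩
  · have h1 := (EuclideanSpace.volume_preserving_symm_measurableEquiv_toLp (Fin n)).symm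
    have h2 := b.measurePreserving_repr
    have h3 := EuclideanSpace.volume_preserving_symm_measurableEquiv_toLp (Fin n)
    exact h3.comp (h2.comp h1)
  · intro x
    rw [hRapp, b.repr_apply_apply, hb0]
    show (inner ℝ u ((EuclideanSpace.equiv (Fin n) ℝ).symm x) : ℝ) = _
    rw [PiLp.inner_apply]
    simp only [RCLike.inner_apply, conj_trivial]
    have : ∀ i, ((EuclideanSpace.equiv (Fin n) ℝ).symm x) i * u i
        = (Real.sqrt n)⁻¹ * x i := fun i => mul_comm _ _
    rw [Finset.sum_congr rfl fun i _ => this i, ← Finset.mul_sum]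
    rw [div_eq_inv_mul]
  · intro x c
    set z : EuclideanSpace ℝ (Fin n) := (EuclideanSpace.equiv (Fin n) ℝ).symm x with hz
    set w : EuclideanSpace ℝ (Fin n) := z - (Real.sqrt n * c) • u with hw
    have hwi : ∀ i, w i = x i - c := by
      intro i
      have h1 : w i = z i - (Real.sqrt n * c) * u i := rfl
      have hz_i : z i = x i := rfl
      have hu_i : u i = (Real.sqrt n)⁻¹ := rfl
      rw [h1, hz_i, hu_i]
      congr 1
      rw [mul_comm (Real.sqrt (n:ℝ)) c, mul_assoc, mul_inv_cancel₀ hsq, mul_one]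
    have hnorm_w : ‖w‖ ^ 2 = ∑ i, (x i - c)^2 := by
      rw [EuclideanSpace.norm_eq, Real.sq_sqrt (by positivity)]
      refine Finset.sum_congr rfl fun i _ => ?_
      rw [hwi i, norm_eq_abs, sq_abs]
    have hbru : b.repr u = EuclideanSpace.single 0 1 := by
      rw [← hb0]; exact b.repr_self 0
    have hrepr_w : ∀ k, b.repr w k = R x k - (if k = 0 then Real.sqrt n * c else 0) := by
      intro k
      have h1 : b.repr w = b.repr z - (Real.sqrt n * c) • EuclideanSpace.single 0 1 := by
        rw [hw, map_sub, _root_.map_smul, hbru]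
      have h2 : b.repr w k = b.repr z k
          - (Real.sqrt n * c) * (EuclideanSpace.single (0:Fin n) (1:ℝ)) k := by
        rw [h1]; simp [PiLp.sub_apply, PiLp.smul_apply, smul_eq_mul]
      rw [h2, hz, ← hRapp, EuclideanSpace.single_apply]
      by_cases hk : k = 0 <;> simp [hk]
    have hnorm_repr : ‖b.repr w‖ ^ 2 = ∑ k, (R x k - (if k = 0 then Real.sqrt n * c else 0))^2 := by
      rw [EuclideanSpace.norm_eq, Real.sq_sqrt (by positivity)]
      refine Finset.sum_congr rfl fun k _ => ?_
      rw [hrepr_w k, norm_eq_abs, sq_abs]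
    rw [← hnorm_repr, b.repr.norm_map, hnorm_w]



lemma prod_gaussianPDFReal (v : ℝ≥0) (μc w : Fin n → ℝ) :
    ∏ i, gaussianPDFReal (μc i) v (w i)
      = ((Real.sqrt (2 * π * v))⁻¹) ^ n
          * Real.exp (-(∑ i, (w i - μc i)^2) / (2 * v)) := by
  simp only [gaussianPDFReal]
  rw [Finset.prod_mul_distrib, Finset.prod_const, Finset.card_univ, Fintype.card_fin,
    ← Real.exp_sum]
  congr 1
  rw [← Finset.sum_div]
  congr 1
  rw [← Finset.sum_neg_distrib]

lemma map_pi_gaussian [NeZero n] (R : (Fin n → ℝ) ≃ᵐ (Fin n → ℝ))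
    (hR : MeasurePreserving R (Measure.pi fun _ => (volume : Measure ℝ))
      (Measure.pi fun _ => (volume : Measure ℝ)))
    (μ0 : ℝ) (m : Fin n → ℝ) (v : ℝ≥0) (hv : v ≠ 0)
    (hsum : ∀ y : Fin n → ℝ, ∑ i, (R.symm y i - μ0)^2 = ∑ k, (y k - m k)^2) :
    Measure.map R (Measure.pi fun _ => gaussianReal μ0 v)
      = Measure.pi fun k => gaussianReal (m k) v := by
  rw [pi_gaussian (fun _ => μ0) v hv, pi_gaussian m v hv,
    map_withDensity_equiv R (Measure.pi fun _ => (volume : Measure ℝ))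
      (g := fun x => ∏ i, gaussianPDF μ0 v (x i))
      (Finset.measurable_prod _ fun i _ =>
        (measurable_gaussianPDF _ _).comp (measurable_pi_apply i)), hR.map_eq]
  congr 1
  funext y
  show ∏ i, gaussianPDF μ0 v (R.symm y i) = ∏ k, gaussianPDF (m k) v (y k)
  simp only [gaussianPDF]
  rw [← ENNReal.ofReal_prod_of_nonneg (fun i _ => gaussianPDFReal_nonneg _ _ _),
    ← ENNReal.ofReal_prod_of_nonneg (fun i _ => gaussianPDFReal_nonneg _ _ _)]
  congr 1
  rw [prod_gaussianPDFReal v (fun _ => μ0) (fun i => R.symm y i),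
    prod_gaussianPDFReal v m y, hsum y]



lemma measure_pi_biInter (ν : Fin n → Measure ℝ) [∀ i, IsProbabilityMeasure (ν i)]
    (T : Finset (Fin n)) (sets : Fin n → Set ℝ) (hs : ∀ i ∈ T, MeasurableSet (sets i)) :
    Measure.pi ν (⋂ i ∈ T, Function.eval i ⁻¹' sets i) = ∏ i ∈ T, ν i (sets i) := by
  classical
  have hset : (⋂ i ∈ T, Function.eval i ⁻¹' sets i)
      = Set.univ.pi (fun i => if i ∈ T then sets i else Set.univ) := by
    ext x
    simp only [Set.mem_iInter, Set.mem_preimage, Set.mem_pi, Set.mem_univ, forall_true_left,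
      Function.eval]
    constructor
    · intro h i
      split_ifs with hi
      · exact h i hi
      · trivial
    · intro h i hi
      have := h i
      rwa [if_pos hi] at this
  rw [hset, Measure.pi_pi,
    show (∏ i, ν i (if i ∈ T then sets i else Set.univ))
        = ∏ i ∈ T, ν i (if i ∈ T then sets i else Set.univ) from
      (Finset.prod_subset (Finset.subset_univ T)
        (fun i _ hi => by rw [if_neg hi]; exact measure_univ)).symm]
  exact Finset.prod_congr rfl fun i hi => by rw [if_pos hi]

lemma iIndep_of_map_pi {Ω : Type*} [MeasureSpace Ω] [IsProbabilityMeasure (ℙ : Measure Ω)]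
    (Z : Ω → (Fin n → ℝ)) (hZ : Measurable Z)
    (ν : Fin n → Measure ℝ) [∀ i, IsProbabilityMeasure (ν i)]
    (h : Measure.map Z ℙ = Measure.pi ν) :
    iIndepFun (fun k ω => Z ω k) ℙ := by
  rw [iIndepFun_iff_measure_inter_preimage_eq_mul]
  intro S sets hsets
  have key : ∀ (T : Finset (Fin n)), (∀ i ∈ T, MeasurableSet (sets i)) →
      ℙ (⋂ i ∈ T, (fun ω => Z ω i) ⁻¹' sets i) = ∏ i ∈ T, ν i (sets i) := by
    intro T hT
    have h1 : (⋂ i ∈ T, (fun ω => Z ω i) ⁻¹' sets i)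
        = Z ⁻¹' (⋂ i ∈ T, Function.eval i ⁻¹' sets i) := by
      ext ω; simp [Function.eval]
    have h2 : MeasurableSet (⋂ i ∈ T, Function.eval i ⁻¹' sets i) :=
      MeasurableSet.biInter T.countable_toSet
        fun i hi => (measurable_pi_apply i) (hT i hi)
    rw [h1, ← Measure.map_apply hZ h2, h, measure_pi_biInter ν T sets hT]
  rw [key S hsets]
  refine Finset.prod_congr rfl fun i hi => ?_
  have := key {i} (by simpa using hsets i hi)
  simpa using this.symm

end StudentAux

open StudentAux in
theorem sample_mean_var_indep
    {Ω : Type*} [MeasureSpace Ω] [IsProbabilityMeasure (ℙ : Measure Ω)]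
    (n : ℕ) (hn : 2 ≤ n) (μ : ℝ) (σ : NNReal) (hσ : 0 < σ)
    (X : Fin n → Ω → ℝ) (hmeas : ∀ i, Measurable (X i))
    (hindep : iIndepFun X ℙ)
    (hdist : ∀ i, Measure.map (X i) ℙ = gaussianReal μ (σ ^ 2)) :
    IndepFun
      (fun ω => (∑ i, X i ω) / n)
      (fun ω => (∑ i, (X i ω - (∑ j, X j ω) / n) ^ 2) / (n - 1)) ℙ := by
  classical
  haveI : NeZero n := ⟨by omega⟩
  have hn0 : (0:ℝ) < n := by
    have : 0 < n := by omega
    exact_mod_cast this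
  have hsqn : Real.sqrt n ≠ 0 := ne_of_gt (Real.sqrt_pos.mpr hn0)
  have hv : (σ^2 : ℝ≥0) ≠ 0 := pow_ne_zero 2 hσ.ne'
  -- Step A : joint law of the X's is the product Gaussian
  set Xvec : Ω → (Fin n → ℝ) := fun ω i => X i ω with hXvec
  have hXvecMeas : Measurable Xvec := measurable_pi_lambda _ hmeas
  have hmapX : Measure.map Xvec ℙ = Measure.pi (fun _ : Fin n => gaussianReal μ (σ^2)) := by
    refine (Measure.pi_eq fun s hs => ?_).symm
    rw [Measure.map_apply hXvecMeas (MeasurableSet.univ_pi hs)]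
    have h1 : Xvec ⁻¹' Set.univ.pi s = ⋂ i ∈ Finset.univ, X i ⁻¹' s i := by
      ext ω; simp [Set.mem_pi, hXvec]
    rw [h1, hindep.measure_inter_preimage_eq_mul Finset.univ (fun i _ => hs i)]
    exact Finset.prod_congr rfl fun i _ => by
      rw [← hdist i, Measure.map_apply (hmeas i) (hs i)]
  -- the rotation
  obtain ⟨R, hRvol, hR0, hRsum⟩ := exists_rot (n := n)
  set m : Fin n → ℝ := fun k => if k = 0 then Real.sqrt n * μ else 0 with hm
  have hmap2 : Measure.map R (Measure.pi fun _ : Fin n => gaussianReal μ (σ^2))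
      = Measure.pi fun k => gaussianReal (m k) (σ^2) := by
    refine map_pi_gaussian R hRvol μ m (σ^2) hv ?_
    intro y
    have h := hRsum (R.symm y) μ
    rw [MeasurableEquiv.apply_symm_apply] at h
    exact h.symm
  set Z : Ω → (Fin n → ℝ) := fun ω => R (Xvec ω) with hZdef
  have hZmeas : Measurable Z := R.measurable.comp hXvecMeas
  have hmapZ : Measure.map Z ℙ = Measure.pi fun k => gaussianReal (m k) (σ^2) := by
    have hcomp : Measure.map Z ℙ = Measure.map R (Measure.map Xvec ℙ) :=
      (Measure.map_map R.measurable hXvecMeas).symm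
    rw [hcomp, hmapX, hmap2]
  have hiW : iIndepFun (fun k ω => Z ω k) ℙ :=
    iIndep_of_map_pi Z hZmeas _ hmapZ
  have hWmeas : ∀ k, Measurable (fun ω => Z ω k) :=
    fun k => (measurable_pi_apply k).comp hZmeas
  have hInd := hiW.indepFun_finset {0} {0}ᶜ disjoint_compl_right hWmeas
  set φ : ((({0} : Finset (Fin n)) : Type _) → ℝ) → ℝ :=
    fun v => v ⟨0, Finset.mem_singleton_self 0⟩ * Real.sqrt n / n with hφdef
  set ψ : (((({0} : Finset (Fin n))ᶜ : Finset (Fin n)) : Type _) → ℝ) → ℝ :=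
    fun v => (∑ k, (v k)^2) / (n - 1) with hψdef
  have hφ : Measurable φ := ((measurable_pi_apply _).mul_const _).div_const _
  have hψ : Measurable ψ :=
    (Finset.measurable_sum _ fun k _ => (measurable_pi_apply k).pow_const 2).div_const _
  have hcomp := hInd.comp hφ hψ
  have e1 : (fun ω => (∑ i, X i ω) / (n:ℝ))
      = φ ∘ (fun ω (i : (({0} : Finset (Fin n)) : Type _)) => Z ω i) := by
    funext ω
    show (∑ i, X i ω) / (n:ℝ) = Z ω 0 * Real.sqrt n / n
    rw [hZdef]
    show (∑ i, X i ω) / (n:ℝ) = R (Xvec ω) 0 * Real.sqrt n / n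
    rw [hR0]
    have : ∑ i, Xvec ω i = ∑ i, X i ω := rfl
    rw [this, div_mul_cancel₀ _ hsqn]
  have e2 : (fun ω => (∑ i, (X i ω - (∑ j, X j ω) / n) ^ 2) / ((n:ℝ) - 1))
      = ψ ∘ (fun ω (i : ((({0} : Finset (Fin n))ᶜ : Finset (Fin n)) : Type _)) => Z ω i) := by
    funext ω
    show _ = (∑ k : ((({0} : Finset (Fin n))ᶜ : Finset (Fin n)) : Type _), (Z ω k)^2) / ((n:ℝ) - 1)
    congr 1
    set c : ℝ := (∑ j, X j ω) / n with hc
    have hsum := hRsum (Xvec ω) c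
    have hx : ∀ i, Xvec ω i = X i ω := fun i => rfl
    have hRx0 : R (Xvec ω) 0 = Real.sqrt n * c := by
      rw [hR0, hc, show ∑ i, Xvec ω i = ∑ j, X j ω from rfl, mul_div_assoc',
        div_eq_div_iff hsqn (ne_of_gt hn0), mul_comm (Real.sqrt (n:ℝ)) (∑ j, X j ω),
        mul_assoc, Real.mul_self_sqrt hn0.le]
    have hsplit : ∑ k, (R (Xvec ω) k - (if k = 0 then Real.sqrt n * c else 0))^2
        = ∑ k ∈ ({0} : Finset (Fin n))ᶜ, (R (Xvec ω) k)^2 := by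
      rw [Fintype.sum_eq_add_sum_compl 0]
      rw [if_pos rfl, hRx0, sub_self]
      rw [zero_pow (by norm_num), zero_add]
      refine Finset.sum_congr rfl fun k hk => ?_
      have hk0 : k ≠ 0 := by simpa [Finset.mem_compl] using hk
      rw [if_neg hk0, sub_zero]
    have hcoe : (∑ k : ((({0} : Finset (Fin n))ᶜ : Finset (Fin n)) : Type _), (Z ω k)^2)
        = ∑ k ∈ ({0} : Finset (Fin n))ᶜ, (R (Xvec ω) k)^2 := by
      rw [hZdef]
      exact Finset.sum_coe_sort (({0} : Finset (Fin n))ᶜ) (fun k => (R (Xvec ω) k)^2)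
    rw [hcoe, ← hsplit, hsum]
  rw [e1, e2]
  exact hcomp
end

section
/- If A is an orthogonal n×n matrix with first row (1/√n,…,1/√n) and Y = A ⬝ X, then ∑ᵢ (Xᵢ - X̄)² = ∑_{i=2}^{n} Yᵢ², where X̄ is the mean of X. -/
open Matrix

theorem sum_sq_dev_eq_tail_sum (n : ℕ) (hn : 1 ≤ n)
    (A : Matrix (Fin n) (Fin n) ℝ) (hA : Aᵀ * A = 1)
    (hrow : ∀ j, A ⟨0, hn⟩ j = 1 / Real.sqrt n)
    (X : Fin n → ℝ) :
    ∑ i, (X i - (∑ j, X j) / n) ^ 2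
      = ∑ i ∈ Finset.univ.erase ⟨0, hn⟩, (A.mulVec X i) ^ 2 := by
  have hn0 : (0:ℝ) < n := by exact_mod_cast hn
  set S := ∑ j, X j with hS
  -- total sum of squares of Y equals that of X
  have htot : ∑ i, (A.mulVec X i) ^ 2 = ∑ i, (X i) ^ 2 := by
    have : (A.mulVec X) ⬝ᵥ (A.mulVec X) = X ⬝ᵥ X := by
      rw [Matrix.dotProduct_mulVec, ← Matrix.mulVec_transpose, Matrix.mulVec_mulVec, hA,
        Matrix.one_mulVec]
    simpa [dotProduct, sq] using this
  -- Y₀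
  have hY0 : A.mulVec X ⟨0, hn⟩ = S / Real.sqrt n := by
    simp only [Matrix.mulVec, dotProduct, hrow, hS]
    rw [Finset.sum_div]
    congr 1; ext j; ring
  have hsqrt : Real.sqrt n ^ 2 = n := Real.sq_sqrt (le_of_lt hn0)
  have hsn : Real.sqrt n ≠ 0 := by positivity
  have hY0sq : A.mulVec X ⟨0, hn⟩ ^ 2 = S ^ 2 / n := by
    rw [hY0, div_pow, hsqrt]
  have hsplit : ∑ i, (A.mulVec X i) ^ 2
      = A.mulVec X ⟨0, hn⟩ ^ 2 + ∑ i ∈ Finset.univ.erase ⟨0, hn⟩, (A.mulVec X i) ^ 2 := by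
    rw [← Finset.add_sum_erase _ _ (Finset.mem_univ _)]
  have key : ∑ i ∈ Finset.univ.erase ⟨0, hn⟩, (A.mulVec X i) ^ 2
      = ∑ i, (X i) ^ 2 - S ^ 2 / n := by
    have := hsplit
    rw [htot, hY0sq] at this
    linarith
  rw [key]
  have hexp : ∑ i, (X i - S / n) ^ 2
      = ∑ i, (X i) ^ 2 - 2 * (S / n) * S + n * (S / n) ^ 2 := by
    have : ∀ i, (X i - S / n) ^ 2 = (X i) ^ 2 - 2 * (S / n) * X i + (S / n) ^ 2 := by
      intro i; ring
    rw [Finset.sum_congr rfl fun i _ => this i]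
    rw [Finset.sum_add_distrib, Finset.sum_sub_distrib, ← Finset.mul_sum, ← hS,
      Finset.sum_const, Finset.card_univ, Fintype.card_fin, nsmul_eq_mul]
  rw [hexp]
  field_simp
  ring
end

section
/- If A is orthogonal with first row (1/√n,…,1/√n) and y = A x, then ∑ᵢ (xᵢ - μ)² = ∑_{i=2}^{n} yᵢ² + (y₁ - √n μ)², so the joint Gaussian density in the y-coordinates splits as a product of one-dimensional Gaussian densities: N(√n μ, σ²) for y₁ and N(0, σ²) for y₂,…,yₙ. -/
open Matrix

theorem sum_sq_split_first (n : ℕ) (hn : 1 ≤ n) (μ : ℝ)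
    (A : Matrix (Fin n) (Fin n) ℝ) (hA : Aᵀ * A = 1)
    (hrow : ∀ j, A ⟨0, hn⟩ j = 1 / Real.sqrt n)
    (x : Fin n → ℝ) :
    ∑ i, (x i - μ) ^ 2
      = (A.mulVec x ⟨0, hn⟩ - Real.sqrt n * μ) ^ 2
        + ∑ i ∈ Finset.univ.erase ⟨0, hn⟩, (A.mulVec x i) ^ 2 := by
  set y := A.mulVec x with hy
  have hsqrt : Real.sqrt n * Real.sqrt n = n := Real.mul_self_sqrt (Nat.cast_nonneg n)
  have hsn : (0:ℝ) < Real.sqrt n := Real.sqrt_pos.mpr (by exact_mod_cast hn)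
  -- norm preservation
  have hnorm : ∑ i, y i ^ 2 = ∑ i, x i ^ 2 := by
    have h1 : x ⬝ᵥ ((Aᵀ * A).mulVec x) = x ⬝ᵥ x := by rw [hA, Matrix.one_mulVec]
    rw [← Matrix.mulVec_mulVec, Matrix.dotProduct_mulVec, Matrix.vecMul_transpose] at h1
    simpa [dotProduct, sq, ← hy] using h1
  -- first coordinate
  have h0 : Real.sqrt n * y ⟨0, hn⟩ = ∑ i, x i := by
    simp only [hy, Matrix.mulVec, dotProduct, hrow]
    rw [Finset.mul_sum]
    congr 1; ext i
    field_simp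
  have hsplit : ∑ i, y i ^ 2 = y ⟨0, hn⟩ ^ 2 + ∑ i ∈ Finset.univ.erase ⟨0, hn⟩, y i ^ 2 := by
    rw [← Finset.add_sum_erase _ _ (Finset.mem_univ _)]
  have hlhs : ∑ i, (x i - μ) ^ 2
      = ∑ i, x i ^ 2 - 2 * μ * ∑ i, x i + n * μ ^ 2 := by
    simp only [sub_sq]
    rw [Finset.sum_add_distrib, Finset.sum_sub_distrib, Finset.mul_sum, Finset.sum_const,
      Finset.card_univ, Fintype.card_fin, nsmul_eq_mul]
    simp only [show ∀ a : ℝ, 2 * a * μ = μ * (2 * a) from fun a => by ring, ← Finset.mul_sum,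
      Finset.mul_sum]
    ring_nf
  rw [hlhs, ← h0, ← hnorm, hsplit]
  ring_nf
  nlinarith [hsqrt]
end
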